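/- Let H be a nontrivial ordered abelian group and let χ : ℚ → H be an injective group homomorphism from the additive group of rationals into H. Then either χ or −χ is strictly order preserving (where ℚ carries its usual order). -/

import Mathlib

private lemma aux_pos {H : Type*} [AddCommGroup H] [LinearOrder H] [IsOrderedAddMonoid H]
    (χ : ℚ →+ H) (h1 : 0 < χ 1) {q : ℚ} (hq : 0 < q) : 0 < χ q := by
  have hden : (0:H) < q.den • χ q := by
    have heq : (q.den : ℚ) * q = (q.num : ℚ) := by
      rw [mul_comm]
      exact_mod_cast Rat.mul_den_eq_num q
    have hnum : χ ((q.den : ℚ) * q) = q.num • χ 1 := by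
      rw [heq, show ((q.num : ℚ)) = q.num • (1:ℚ) by simp, map_zsmul]
    have h2 : q.den • χ q = χ ((q.den : ℚ) * q) := by
      rw [show ((q.den : ℚ)) * q = q.den • q by simp [nsmul_eq_mul], map_nsmul]
    rw [h2, hnum]
    have hn : 0 < q.num := Rat.num_pos.mpr hq
    exact zsmul_pos h1 hn
  by_contra hle
  push_neg at hle
  have : q.den • χ q ≤ 0 := nsmul_nonpos hle q.den
  exact absurd hden (not_lt.mpr this)

/-- If `χ : ℚ → H` is an injective group homomorphism into a nontrivial
ordered abelian group, then either `χ` or `-χ` is strictly order preserving. -/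
theorem stmt4 {H : Type*} [AddCommGroup H] [LinearOrder H] [IsOrderedAddMonoid H] [Nontrivial H]
    (χ : ℚ →+ H) (hχ : Function.Injective χ) :
    StrictMono χ ∨ StrictMono (fun q : ℚ => - χ q) := by
  have h1 : χ 1 ≠ 0 := fun h => one_ne_zero (hχ (h.trans (map_zero χ).symm))
  rcases h1.lt_or_gt with h | h
  · right
    intro a b hab
    have key : 0 < (-χ) (b - a) := by
      have := aux_pos (-χ) (q := b - a) (by simpa using h) (by linarith)
      simpa using this
    simp only [AddMonoidHom.neg_apply, map_sub, neg_sub] at key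
    exact sub_pos.mp key
  · left
    intro a b hab
    have key : 0 < χ (b - a) := aux_pos χ h (by linarith)
    rw [map_sub] at key
    exact sub_pos.mp key
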